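/- arXiv:2310.03774 — 4 statements merged into one kernel-verified Lean document; each statement's English description precedes it below -/
import Mathlib

section
/- (Theorem 1, equilibrium part.) Assume H is invertible and let x_0 ∈ ℝⁿ. Define, for each player i, the control u*_i(t) = −(1/(r_i·d_i))·B̂_iᵀ·exp((T−t)Λᵀ)·L̂_i·H⁻¹·exp(TΛ)·x_0 for t ∈ [0,T], and u*_i(t) = 0 for t ∉ [0,T]. Then u* = (u*_1,…,u*_n) is an open-loop Nash equilibrium of the delayed game (the non-stubborn opinion-formation game) with initial opinion vector x_0. -/
open Matrix MeasureTheory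
open scoped Matrix

noncomputable section

/-- The matrix exponential of a real `n × n` matrix. -/
def mexp {n : ℕ} (A : Matrix (Fin n) (Fin n) ℝ) : Matrix (Fin n) (Fin n) ℝ :=
  NormedSpace.exp A

/-- An admissible control of the delayed game: a bounded measurable function `u : ℝ → ℝ`
with `u s = 0` for `s < 0`. -/
def AdmissibleD (u : ℝ → ℝ) : Prop :=
  Measurable u ∧ (∃ C, ∀ s, |u s| ≤ C) ∧ ∀ s < 0, u s = 0

/-- An admissible control of the delay-free game: a bounded measurable function. -/
def AdmissibleF (u : ℝ → ℝ) : Prop :=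
  Measurable u ∧ ∃ C, ∀ s, |u s| ≤ C

/-- Data of the differential games of opinion formation: the system matrix `Λ`
(the continuous-time Hegselmann–Krause matrix `Λ = D⁻¹A − I`), the input delay `τ`,
the terminal time `tf`, and for each player `i` the input vector `B i`, the control
weight `r i`, the neighborhood size `d i = |𝒩ᵢ|`, the agent-`i` graph Laplacian `L i`
and the stubbornness coefficient `ω i`. -/
structure GameData (n : ℕ) where
  Λ : Matrix (Fin n) (Fin n) ℝ
  τ : ℝ
  tf : ℝ
  B : Fin n → Fin n → ℝ
  r : Fin n → ℝ
  d : Fin n → ℝ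
  L : Fin n → Matrix (Fin n) (Fin n) ℝ
  ω : Fin n → ℝ

namespace GameData

variable {n : ℕ} (G : GameData n)

/-- The standing hypotheses: `τ ≥ 0`, `t_f > τ`, `rᵢ > 0`, `dᵢ > 0`, each `Lᵢ` symmetric
positive semidefinite, and `ωᵢ ∈ [0,1]`. -/
def Valid : Prop :=
  0 ≤ G.τ ∧ G.τ < G.tf ∧ (∀ i, 0 < G.r i) ∧ (∀ i, 0 < G.d i) ∧
    (∀ i, (G.L i).PosSemidef) ∧ ∀ i, G.ω i ∈ Set.Icc (0 : ℝ) 1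

/-- `T = t_f − τ`. -/
def T : ℝ := G.tf - G.τ

/-- `B̂ᵢ = exp(−τΛ)·Bᵢ`. -/
def Bhat (i : Fin n) : Fin n → ℝ := (mexp ((-G.τ) • G.Λ)).mulVec (G.B i)

/-- `L̂ᵢ = exp(τΛᵀ)·Lᵢ·exp(τΛ)`. -/
def Lhat (i : Fin n) : Matrix (Fin n) (Fin n) ℝ :=
  mexp (G.τ • G.Λᵀ) * G.L i * mexp (G.τ • G.Λ)

/-- `Sᵢ = (1/rᵢ)·B̂ᵢ·B̂ᵢᵀ`. -/
def S (i : Fin n) : Matrix (Fin n) (Fin n) ℝ :=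
  (1 / G.r i) • vecMulVec (G.Bhat i) (G.Bhat i)

/-- The matrix `∫₀ᵗ exp((t−s)Λ)·Sᵢ·exp((T−s)Λᵀ) ds` (entrywise integral). -/
def Phi (T' : ℝ) (i : Fin n) (t : ℝ) : Matrix (Fin n) (Fin n) ℝ :=
  Matrix.of fun a b =>
    ∫ s in (0:ℝ)..t, (mexp ((t - s) • G.Λ) * G.S i * mexp ((T' - s) • G.Λᵀ)) a b

/-- `Ψᵢ = ∫₀ᵀ exp((T−s)Λ)·Sᵢ·exp((T−s)Λᵀ) ds` with `T = t_f − τ`. -/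
def Psi (i : Fin n) : Matrix (Fin n) (Fin n) ℝ := G.Phi G.T i G.T

/-- `H = I + ∑ⱼ (1/dⱼ)·Ψⱼ·L̂ⱼ`. -/
def H : Matrix (Fin n) (Fin n) ℝ :=
  1 + ∑ j : Fin n, (1 / G.d j) • (G.Psi j * G.Lhat j)

/-- `Wᵢ`: the matrix whose `(i,i)` entry is `ωᵢ` and all other entries are `0`. -/
def W (i : Fin n) : Matrix (Fin n) (Fin n) ℝ := Matrix.single i i (G.ω i)

/-- `Ŵᵢ = exp(τΛᵀ)·Wᵢ·exp(τΛ)`. -/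
def What (i : Fin n) : Matrix (Fin n) (Fin n) ℝ :=
  mexp (G.τ • G.Λᵀ) * G.W i * mexp (G.τ • G.Λ)

/-- `Ĥ = I + ∑ⱼ Ψⱼ·(Ŵⱼ + ((1−ωⱼ)/dⱼ)·L̂ⱼ)`. -/
def Hhat : Matrix (Fin n) (Fin n) ℝ :=
  1 + ∑ j : Fin n, G.Psi j * (G.What j + ((1 - G.ω j) / G.d j) • G.Lhat j)

/-- The trajectory of the delayed game:
`x_u(t) = exp(tΛ)·x₀ + ∫₀ᵗ exp((t−s)Λ)·(∑ⱼ Bⱼ·uⱼ(s−τ)) ds`. -/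
def xtraj (x0 : Fin n → ℝ) (u : Fin n → ℝ → ℝ) (t : ℝ) : Fin n → ℝ :=
  (mexp (t • G.Λ)).mulVec x0 +
    ∫ s in (0:ℝ)..t, (mexp ((t - s) • G.Λ)).mulVec (∑ j : Fin n, u j (s - G.τ) • G.B j)

/-- The trajectory of the delay-free game:
`y_u(t) = exp(tΛ)·y₀ + ∫₀ᵗ exp((t−s)Λ)·(∑ⱼ B̂ⱼ·uⱼ(s)) ds`. -/
def ytraj (y0 : Fin n → ℝ) (u : Fin n → ℝ → ℝ) (t : ℝ) : Fin n → ℝ :=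
  (mexp (t • G.Λ)).mulVec y0 +
    ∫ s in (0:ℝ)..t, (mexp ((t - s) • G.Λ)).mulVec (∑ j : Fin n, u j s • G.Bhat j)

/-- Player `i`'s cost in the delayed game:
`Jᵢ(u) = (1/dᵢ)·x_u(t_f)ᵀ·Lᵢ·x_u(t_f) + ∫₀^{t_f} rᵢ·uᵢ(t−τ)² dt`. -/
def J (x0 : Fin n → ℝ) (i : Fin n) (u : Fin n → ℝ → ℝ) : ℝ :=
  (1 / G.d i) * (G.xtraj x0 u G.tf ⬝ᵥ (G.L i).mulVec (G.xtraj x0 u G.tf)) +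
    ∫ t in (0:ℝ)..G.tf, G.r i * u i (t - G.τ) ^ 2

/-- Player `i`'s cost in the delay-free game:
`Ĵᵢ(u) = (1/dᵢ)·y_u(T)ᵀ·L̂ᵢ·y_u(T) + ∫₀ᵀ rᵢ·uᵢ(t)² dt`. -/
def JF (y0 : Fin n → ℝ) (i : Fin n) (u : Fin n → ℝ → ℝ) : ℝ :=
  (1 / G.d i) * (G.ytraj y0 u G.T ⬝ᵥ (G.Lhat i).mulVec (G.ytraj y0 u G.T)) +
    ∫ t in (0:ℝ)..G.T, G.r i * u i t ^ 2

/-- Player `i`'s stubborn cost in the delayed game. -/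
def Jstub (x0 : Fin n → ℝ) (i : Fin n) (u : Fin n → ℝ → ℝ) : ℝ :=
  (G.xtraj x0 u G.tf - x0) ⬝ᵥ (G.W i).mulVec (G.xtraj x0 u G.tf - x0) +
    ((1 - G.ω i) / G.d i) * (G.xtraj x0 u G.tf ⬝ᵥ (G.L i).mulVec (G.xtraj x0 u G.tf)) +
    ∫ t in (0:ℝ)..G.tf, G.r i * u i (t - G.τ) ^ 2

/-- Player `i`'s stubborn cost in the delay-free game, with reference opinion `x₀`. -/
def JstubF (x0 y0 : Fin n → ℝ) (i : Fin n) (u : Fin n → ℝ → ℝ) : ℝ :=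
  ((mexp (G.τ • G.Λ)).mulVec (G.ytraj y0 u G.T) - x0) ⬝ᵥ
      (G.W i).mulVec ((mexp (G.τ • G.Λ)).mulVec (G.ytraj y0 u G.T) - x0) +
    ((1 - G.ω i) / G.d i) * (G.ytraj y0 u G.T ⬝ᵥ (G.Lhat i).mulVec (G.ytraj y0 u G.T)) +
    ∫ t in (0:ℝ)..G.T, G.r i * u i t ^ 2

/-- Open-loop Nash equilibrium of the delayed game. -/
def NashD (x0 : Fin n → ℝ) (u : Fin n → ℝ → ℝ) : Prop :=
  (∀ i, AdmissibleD (u i)) ∧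
    ∀ i, ∀ v : ℝ → ℝ, AdmissibleD v →
      G.J x0 i u ≤ G.J x0 i (Function.update u i v)

/-- Open-loop Nash equilibrium of the delay-free game. -/
def NashF (y0 : Fin n → ℝ) (u : Fin n → ℝ → ℝ) : Prop :=
  (∀ i, AdmissibleF (u i)) ∧
    ∀ i, ∀ v : ℝ → ℝ, AdmissibleF v →
      G.JF y0 i u ≤ G.JF y0 i (Function.update u i v)

/-- Open-loop Nash equilibrium of the stubborn delayed game. -/
def NashStubD (x0 : Fin n → ℝ) (u : Fin n → ℝ → ℝ) : Prop :=
  (∀ i, AdmissibleD (u i)) ∧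
    ∀ i, ∀ v : ℝ → ℝ, AdmissibleD v →
      G.Jstub x0 i u ≤ G.Jstub x0 i (Function.update u i v)

/-- Open-loop Nash equilibrium of the stubborn delay-free game. -/
def NashStubF (x0 y0 : Fin n → ℝ) (u : Fin n → ℝ → ℝ) : Prop :=
  (∀ i, AdmissibleF (u i)) ∧
    ∀ i, ∀ v : ℝ → ℝ, AdmissibleF v →
      G.JstubF x0 y0 i u ≤ G.JstubF x0 y0 i (Function.update u i v)

end GameData

attribute [local instance] Matrix.linftyOpNormedRing Matrix.linftyOpNormedAlgebra

section aux
variable {n : ℕ}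

lemma mexp_cont (A : Matrix (Fin n) (Fin n) ℝ) : Continuous fun t : ℝ => mexp (t • A) :=
  (NormedSpace.exp_continuous (𝔸 := Matrix (Fin n) (Fin n) ℝ)).comp (continuous_id.smul continuous_const)

lemma mexp_cont' (A : Matrix (Fin n) (Fin n) ℝ) {g : ℝ → ℝ} (hg : Continuous g) :
    Continuous fun t : ℝ => mexp (g t • A) :=
  (mexp_cont A).comp hg

lemma mexp_add (A : Matrix (Fin n) (Fin n) ℝ) (s t : ℝ) :
    mexp ((s + t) • A) = mexp (s • A) * mexp (t • A) := by
  rw [add_smul]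
  exact NormedSpace.exp_add_of_commute (Commute.smul_left (Commute.smul_right (Commute.refl A) t) s)

lemma mexp_transpose (A : Matrix (Fin n) (Fin n) ℝ) (c : ℝ) :
    (mexp (c • A))ᵀ = mexp (c • Aᵀ) := by
  rw [mexp, mexp, ← Matrix.exp_transpose, Matrix.transpose_smul]

lemma mexp_zero (A : Matrix (Fin n) (Fin n) ℝ) : mexp ((0:ℝ) • A) = 1 := by
  rw [zero_smul, mexp, NormedSpace.exp_zero]

lemma mexp_mul_neg (A : Matrix (Fin n) (Fin n) ℝ) (t : ℝ) :
    mexp (t • A) * mexp ((-t) • A) = 1 := by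
  rw [← mexp_add, add_neg_cancel, mexp_zero]

/-- master integrability lemma -/
lemma II {E : Type*} [NormedAddCommGroup E] [NormedSpace ℝ E]
    (g : ℝ → ℝ) (hg : Measurable g) (Cg : ℝ) (hCg : ∀ s, |g s| ≤ Cg)
    (Φ : ℝ → E) (hΦ : Continuous Φ) (a b : ℝ) :
    IntervalIntegrable (fun s => g s • Φ s) volume a b := by
  obtain ⟨CΦ, hCΦ⟩ := (isCompact_uIcc (a := a) (b := b)).exists_bound_of_continuousOn
    hΦ.continuousOn
  rw [intervalIntegrable_iff]
  haveI : IsFiniteMeasure (volume.restrict (Set.uIoc a b)) := by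
    constructor
    rw [Measure.restrict_apply_univ]
    exact ((measure_mono Set.uIoc_subset_uIcc).trans_lt (isCompact_uIcc.measure_lt_top))
  refine Integrable.mono' (integrable_const (Cg * CΦ)) ?_ ?_
  · exact (hg.aestronglyMeasurable.smul hΦ.aestronglyMeasurable).restrict
  · refine (ae_restrict_iff' measurableSet_uIoc).2 (.of_forall fun s hs => ?_)
    have hs' : s ∈ Set.uIcc a b := Set.uIoc_subset_uIcc hs
    rw [norm_smul, Real.norm_eq_abs]
    exact mul_le_mul (hCg s) (hCΦ s hs') (norm_nonneg _) ((abs_nonneg _).trans (hCg s))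

lemma IIs (g : ℝ → ℝ) (hg : Measurable g) (Cg : ℝ) (hCg : ∀ s, |g s| ≤ Cg) (a b : ℝ) :
    IntervalIntegrable g volume a b := by
  have := II g hg Cg hCg (fun _ => (1:ℝ)) continuous_const a b
  simpa using this

lemma IIm (g : ℝ → ℝ) (hg : Measurable g) (Cg : ℝ) (hCg : ∀ s, |g s| ≤ Cg)
    {Φ : ℝ → ℝ} (hΦ : Continuous Φ) (a b : ℝ) :
    IntervalIntegrable (fun s => g s * Φ s) volume a b := by
  simpa [smul_eq_mul] using II g hg Cg hCg Φ hΦ a b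

lemma iint_apply {a b : ℝ} {f : ℝ → (Fin n → ℝ)} (hf : IntervalIntegrable f volume a b)
    (j : Fin n) : (∫ s in a..b, f s) j = ∫ s in a..b, f s j := by
  simpa using ((ContinuousLinearMap.proj (R := ℝ) (φ := fun _ : Fin n => ℝ) j
    ).intervalIntegral_comp_comm hf).symm

lemma iint_comp_proj {a b : ℝ} {f : ℝ → (Fin n → ℝ)} (hf : IntervalIntegrable f volume a b)
    (j : Fin n) : IntervalIntegrable (fun s => f s j) volume a b := by
  rw [intervalIntegrable_iff] at hf ⊢
  exact hf.norm.mono' ((continuous_apply j).comp_aestronglyMeasurable hf.aestronglyMeasurable)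
    (.of_forall fun s => by simpa using norm_le_pi_norm (f s) j)

lemma dot_iint {a b : ℝ} (c : Fin n → ℝ) {f : ℝ → (Fin n → ℝ)}
    (hf : IntervalIntegrable f volume a b) :
    c ⬝ᵥ (∫ s in a..b, f s) = ∫ s in a..b, c ⬝ᵥ f s := by
  simp only [dotProduct]
  rw [intervalIntegral.integral_finset_sum
    (fun j _ => ((iint_comp_proj hf j).const_mul (c j)))]
  refine Finset.sum_congr rfl fun j _ => ?_
  rw [iint_apply hf j, ← intervalIntegral.integral_const_mul]

lemma mulVec_eq_sum_smul (M : Matrix (Fin n) (Fin n) ℝ) (x : Fin n → ℝ) :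
    M *ᵥ x = ∑ b : Fin n, x b • (Mᵀ b) := by
  funext a
  simp [Matrix.mulVec, dotProduct, Finset.sum_apply, Matrix.transpose_apply, mul_comm]

lemma II_mulVec {a b : ℝ} (M : Matrix (Fin n) (Fin n) ℝ) {f : ℝ → (Fin n → ℝ)}
    (hf : IntervalIntegrable f volume a b) :
    IntervalIntegrable (fun s => M *ᵥ f s) volume a b := by
  have h : (fun s => M *ᵥ f s) = ∑ c : Fin n, fun s => f s c • (Mᵀ c) := by
    funext s
    rw [mulVec_eq_sum_smul]
    simp [Finset.sum_apply]
  rw [h]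
  exact IntervalIntegrable.sum _ fun c _ =>
    ⟨((iint_comp_proj hf c).1).smul_const _, ((iint_comp_proj hf c).2).smul_const _⟩

lemma mulVec_iint {a b : ℝ} (M : Matrix (Fin n) (Fin n) ℝ) {f : ℝ → (Fin n → ℝ)}
    (hf : IntervalIntegrable f volume a b) :
    (∫ s in a..b, M *ᵥ f s) = M *ᵥ (∫ s in a..b, f s) := by
  funext j
  rw [iint_apply (II_mulVec M hf) j]
  show _ = M j ⬝ᵥ _
  rw [dot_iint (M j) hf]
  rfl

lemma dot_shift (M : Matrix (Fin n) (Fin n) ℝ) (x y : Fin n → ℝ) :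
    (M *ᵥ x) ⬝ᵥ y = x ⬝ᵥ (Mᵀ *ᵥ y) := by
  rw [Matrix.dotProduct_mulVec, Matrix.vecMul_transpose]

lemma vecMulVec_mulVec' (v w x : Fin n → ℝ) :
    Matrix.vecMulVec v w *ᵥ x = (w ⬝ᵥ x) • v := by
  funext a
  simp [Matrix.mulVec, dotProduct, Matrix.vecMulVec_apply, Finset.mul_sum, mul_assoc,
    Pi.smul_apply, smul_eq_mul, Finset.sum_mul]
  exact Finset.sum_congr rfl fun b _ => by ring

lemma mulVec_sum_smul (M : Matrix (Fin n) (Fin n) ℝ) (c : Fin n → ℝ) (y : Fin n → Fin n → ℝ) :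
    M *ᵥ (∑ j : Fin n, c j • y j) = ∑ j : Fin n, c j • (M *ᵥ y j) := by
  rw [show M *ᵥ (∑ j : Fin n, c j • y j) = M.mulVecLin (∑ j : Fin n, c j • y j) from rfl,
    map_sum]
  simp [Matrix.mulVecLin_apply]

lemma sum_mulVec (M : Fin n → Matrix (Fin n) (Fin n) ℝ) (x : Fin n → ℝ) :
    (∑ j : Fin n, M j) *ᵥ x = ∑ j : Fin n, (M j *ᵥ x) := by
  funext a
  simp only [Matrix.mulVec, dotProduct, Finset.sum_apply, Matrix.sum_apply, Finset.sum_mul]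
  exact Finset.sum_comm

lemma mexp_mulVec_mexp (A : Matrix (Fin n) (Fin n) ℝ) (a b : ℝ) (x : Fin n → ℝ) :
    mexp (a • A) *ᵥ (mexp (b • A) *ᵥ x) = mexp ((a + b) • A) *ᵥ x := by
  rw [Matrix.mulVec_mulVec, ← mexp_add]

end aux

/-- Theorem 1, equilibrium part: if `H` is invertible, the profile
`u*ᵢ(t) = −(1/(rᵢdᵢ))·B̂ᵢᵀ·exp((T−t)Λᵀ)·L̂ᵢ·H⁻¹·exp(TΛ)·x₀` on `[0,T]` (and `0` outside)
is an open-loop Nash equilibrium of the delayed (non-stubborn) game with initial opinion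
vector `x₀`. -/
theorem statement_11 {n : ℕ} (G : GameData n) (hG : G.Valid) (hH : IsUnit G.H)
    (x0 : Fin n → ℝ) (u : Fin n → ℝ → ℝ)
    (hu1 : ∀ i, ∀ t ∈ Set.Icc (0:ℝ) G.T, u i t =
      -(1 / (G.r i * G.d i)) *
        (G.Bhat i ⬝ᵥ (mexp ((G.T - t) • G.Λᵀ)).mulVec
          ((G.Lhat i).mulVec (G.H⁻¹.mulVec ((mexp (G.T • G.Λ)).mulVec x0)))))
    (hu2 : ∀ i, ∀ t, t ∉ Set.Icc (0:ℝ) G.T → u i t = 0) :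
    G.NashD x0 u := by
  
  obtain ⟨hτ0, hτtf, hr, hd, hPSD, -⟩ := hG
  have hT0 : (0:ℝ) ≤ G.T := sub_nonneg.2 hτtf.le
  have htf0 : (0:ℝ) ≤ G.tf := hτ0.trans hτtf.le
  set η : Fin n → ℝ := G.H⁻¹.mulVec ((mexp (G.T • G.Λ)).mulVec x0) with hη
  set ξ : Fin n → ℝ := (mexp (G.τ • G.Λ)).mulVec η with hξ
  set c : Fin n → ℝ → ℝ := fun i t =>
    -(1 / (G.r i * G.d i)) *
      (G.Bhat i ⬝ᵥ (mexp ((G.T - t) • G.Λᵀ)).mulVec ((G.Lhat i).mulVec η)) with hc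
  have hccont : ∀ i, Continuous (c i) := by
    intro i
    exact continuous_const.mul (Continuous.dotProduct continuous_const
      (Continuous.matrix_mulVec (mexp_cont' _ (continuous_const.sub continuous_id))
        continuous_const))
  have hind : ∀ i, u i = (Set.Icc (0:ℝ) G.T).indicator (c i) := by
    intro i
    funext t
    by_cases ht : t ∈ Set.Icc (0:ℝ) G.T
    · rw [Set.indicator_of_mem ht]; exact hu1 i t ht
    · rw [Set.indicator_of_notMem ht]; exact hu2 i t ht
  have hmeas : ∀ i, Measurable (u i) := by
    intro i
    rw [hind i]
    exact ((hccont i).measurable).indicator measurableSet_Icc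
  have hbd : ∀ i, ∃ C, ∀ s, |u i s| ≤ C := by
    intro i
    obtain ⟨C, hC⟩ := (isCompact_Icc (a := (0:ℝ)) (b := G.T)).exists_bound_of_continuousOn
      (hccont i).continuousOn
    refine ⟨max C 0, fun s => ?_⟩
    rw [hind i]
    by_cases hs : s ∈ Set.Icc (0:ℝ) G.T
    · rw [Set.indicator_of_mem hs]
      exact le_max_of_le_left (by simpa [Real.norm_eq_abs] using hC s hs)
    · simp [Set.indicator_of_notMem hs, le_max_right]
  have hadm : ∀ i, AdmissibleD (u i) := by
    intro i
    exact ⟨hmeas i, hbd i, fun s hs => hu2 i s (fun h => absurd h.1 (not_le.2 hs))⟩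
  refine ⟨hadm, ?_⟩
  intro i v hv
  obtain ⟨hvmeas, ⟨Cv, hCv⟩, hvz⟩ := hv
  obtain ⟨Cu, hCu⟩ := hbd i
  set w : ℝ → ℝ := fun s => v s - u i s with hw
  have hwmeas : Measurable w := hvmeas.sub (hmeas i)
  have hwbd : ∀ s, |w s| ≤ Cv + Cu := by
    intro s
    calc |v s - u i s| ≤ |v s| + |u i s| := abs_sub _ _
    _ ≤ Cv + Cu := add_le_add (hCv s) (hCu s)
  have hwz : ∀ s, s < 0 → w s = 0 := by
    intro s hs
    have h1 : u i s = 0 := hu2 i s (fun h => absurd h.1 (not_le.2 hs))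
    have h2 : v s = 0 := hvz s hs
    simp [hw, h1, h2]
  have hbvcont : ∀ j : Fin n, Continuous fun s : ℝ => mexp ((G.tf - s) • G.Λ) *ᵥ G.B j := by
    intro j
    exact Continuous.matrix_mulVec (mexp_cont' _ (continuous_const.sub continuous_id))
      continuous_const
  have humeas : ∀ j : Fin n, Measurable fun s : ℝ => u j (s - G.τ) := fun j =>
    (hmeas j).comp (measurable_id.sub measurable_const)
  have hIu : ∀ j : Fin n, IntervalIntegrable
      (fun s => u j (s - G.τ) • (mexp ((G.tf - s) • G.Λ) *ᵥ G.B j)) volume 0 G.tf := by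
    intro j
    obtain ⟨C, hC⟩ := hbd j
    exact II _ (humeas j) C (fun s => hC _) _ (hbvcont j) _ _
  have hwτmeas : Measurable fun s : ℝ => w (s - G.τ) :=
    hwmeas.comp (measurable_id.sub measurable_const)
  have hIw : IntervalIntegrable (fun s => w (s - G.τ) • (mexp ((G.tf - s) • G.Λ) *ᵥ G.B i))
      volume 0 G.tf :=
    II _ hwτmeas (Cv + Cu) (fun s => hwbd _) _ (hbvcont i) _ _
  have hIU : IntervalIntegrable
      (fun s => mexp ((G.tf - s) • G.Λ) *ᵥ (∑ j : Fin n, u j (s - G.τ) • G.B j)) volume 0 G.tf := by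
    have h : (fun s => mexp ((G.tf - s) • G.Λ) *ᵥ (∑ j : Fin n, u j (s - G.τ) • G.B j))
        = ∑ j : Fin n, fun s => u j (s - G.τ) • (mexp ((G.tf - s) • G.Λ) *ᵥ G.B j) := by
      funext s
      rw [Finset.sum_apply]
      exact mulVec_sum_smul _ _ _
    rw [h]
    exact IntervalIntegrable.sum _ fun j _ => hIu j
  set δ : Fin n → ℝ := ∫ s in (0:ℝ)..G.tf, w (s - G.τ) • (mexp ((G.tf - s) • G.Λ) *ᵥ G.B i)
    with hδ
  have hsum : ∀ t : ℝ, (∑ j : Fin n, Function.update u i v j t • G.B j)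
      = (∑ j : Fin n, u j t • G.B j) + w t • G.B i := by
    intro t
    have h0 : ∀ j : Fin n, Function.update u i v j t • G.B j
        = u j t • G.B j + (if j = i then w t • G.B i else 0) := by
      intro j
      rcases eq_or_ne j i with h | h
      · subst h
        rw [Function.update_self, if_pos rfl]
        have hv : v t = u j t + w t := by simp [hw]
        rw [hv, add_smul]
      · rw [Function.update_of_ne h, if_neg h, add_zero]
    rw [Finset.sum_congr rfl fun j _ => h0 j, Finset.sum_add_distrib,
      Finset.sum_ite_eq' Finset.univ i (fun _ => w t • G.B i)]
    simp
  have hXP : G.xtraj x0 (Function.update u i v) G.tf = G.xtraj x0 u G.tf + δ := by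
    unfold GameData.xtraj
    have h : (fun s => mexp ((G.tf - s) • G.Λ) *ᵥ
          (∑ j : Fin n, Function.update u i v j (s - G.τ) • G.B j))
        = fun s => (mexp ((G.tf - s) • G.Λ) *ᵥ (∑ j : Fin n, u j (s - G.τ) • G.B j))
            + w (s - G.τ) • (mexp ((G.tf - s) • G.Λ) *ᵥ G.B i) := by
      funext s
      rw [hsum (s - G.τ), Matrix.mulVec_add, Matrix.mulVec_smul]
    rw [h, intervalIntegral.integral_add hIU hIw, hδ]
    abel
  have hHinv : G.H * G.H⁻¹ = 1 :=
    Matrix.mul_nonsing_inv _ ((Matrix.isUnit_iff_isUnit_det _).1 hH)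
  have hTτ : G.τ + G.T = G.tf := by
    show G.τ + (G.tf - G.τ) = G.tf
    ring
  have hqcont : ∀ j : Fin n, Continuous fun σ : ℝ =>
      (mexp ((G.T - σ) • G.Λ) * G.S j * mexp ((G.T - σ) • G.Λᵀ)) *ᵥ ((G.Lhat j).mulVec η) := by
    intro j
    exact Continuous.matrix_mulVec
      (Continuous.matrix_mul
        (Continuous.matrix_mul (mexp_cont' _ (continuous_const.sub continuous_id))
          continuous_const)
        (mexp_cont' _ (continuous_const.sub continuous_id))) continuous_const
  have hVj : ∀ j : Fin n,
      (∫ s in (0:ℝ)..G.tf, u j (s - G.τ) • (mexp ((G.tf - s) • G.Λ) *ᵥ G.B j))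
        = mexp (G.τ • G.Λ) *ᵥ (-((1 / G.d j) • ((G.Psi j * G.Lhat j) *ᵥ η))) := by
    intro j
    obtain ⟨Cj, hCj⟩ := hbd j
    have e1 : (fun s => u j (s - G.τ) • (mexp ((G.tf - s) • G.Λ) *ᵥ G.B j))
        = fun s => (fun σ => u j σ • (mexp ((G.T - σ) • G.Λ) *ᵥ G.B j)) (s - G.τ) := by
      funext s
      have hts : G.T - (s - G.τ) = G.tf - s := by
        show G.tf - G.τ - (s - G.τ) = G.tf - s
        ring
      simp only [hts]
    rw [e1, intervalIntegral.integral_comp_sub_right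
      (fun σ => u j σ • (mexp ((G.T - σ) • G.Λ) *ᵥ G.B j)) G.τ]
    have hb0 : (0:ℝ) - G.τ = -G.τ := by ring
    have hb1 : G.tf - G.τ = G.T := rfl
    rw [hb0, hb1]
    have hF : ∀ (a b : ℝ), IntervalIntegrable
        (fun σ => u j σ • (mexp ((G.T - σ) • G.Λ) *ᵥ G.B j)) volume a b := by
      intro a b
      exact II _ (hmeas j) Cj hCj _
        (Continuous.matrix_mulVec (mexp_cont' _ (continuous_const.sub continuous_id))
          continuous_const) a b
    rw [← intervalIntegral.integral_add_adjacent_intervals (b := (0:ℝ)) (hF _ _) (hF _ _)]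
    have hzero : (∫ σ in (-G.τ)..(0:ℝ), u j σ • (mexp ((G.T - σ) • G.Λ) *ᵥ G.B j)) = 0 := by
      apply intervalIntegral.integral_zero_ae
      rw [ae_iff]
      refine measure_mono_null (fun σ hσ => ?_) (measure_singleton (0:ℝ))
      simp only [Set.mem_setOf_eq, Classical.not_imp] at hσ
      obtain ⟨hmem, hne⟩ := hσ
      rw [Set.mem_singleton_iff]
      by_contra hσ0
      have hmem' : σ ∈ Set.Ioc (-G.τ) 0 := by
        rwa [Set.uIoc_of_le (neg_nonpos.2 hτ0)] at hmem
      have hσneg : σ < 0 := lt_of_le_of_ne hmem'.2 hσ0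
      exact hne (by rw [hu2 j σ (fun h => absurd h.1 (not_le.2 hσneg)), zero_smul])
    rw [hzero, zero_add]
    have heq1 : Set.EqOn (fun σ => u j σ • (mexp ((G.T - σ) • G.Λ) *ᵥ G.B j))
        (fun σ => c j σ • (mexp ((G.T - σ) • G.Λ) *ᵥ G.B j)) (Set.uIcc (0:ℝ) G.T) := by
      intro σ hσ
      rw [Set.uIcc_of_le hT0] at hσ
      show u j σ • _ = _
      rw [hind j, Set.indicator_of_mem hσ]
    rw [intervalIntegral.integral_congr heq1]
    have heq2 : Set.EqOn (fun σ => c j σ • (mexp ((G.T - σ) • G.Λ) *ᵥ G.B j))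
        (fun σ => mexp (G.τ • G.Λ) *ᵥ (-((1 / G.d j) •
          ((mexp ((G.T - σ) • G.Λ) * G.S j * mexp ((G.T - σ) • G.Λᵀ)) *ᵥ
            ((G.Lhat j).mulVec η))))) (Set.uIcc (0:ℝ) G.T) := by
      intro σ _
      show c j σ • _ = _
      beta_reduce
      have hq : (mexp ((G.T - σ) • G.Λ) * G.S j * mexp ((G.T - σ) • G.Λᵀ)) *ᵥ
          ((G.Lhat j).mulVec η)
          = (1 / G.r j) • ((G.Bhat j ⬝ᵥ (mexp ((G.T - σ) • G.Λᵀ) *ᵥ ((G.Lhat j).mulVec η))) •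
              (mexp ((G.T - σ) • G.Λ) *ᵥ G.Bhat j)) := by
        rw [← Matrix.mulVec_mulVec, ← Matrix.mulVec_mulVec, GameData.S,
          Matrix.smul_mulVec, vecMulVec_mulVec', Matrix.mulVec_smul,
          Matrix.mulVec_smul]
      rw [hq, Matrix.mulVec_neg, Matrix.mulVec_smul, Matrix.mulVec_smul, Matrix.mulVec_smul]
      rw [show mexp (G.τ • G.Λ) *ᵥ (mexp ((G.T - σ) • G.Λ) *ᵥ G.Bhat j)
          = mexp ((G.T - σ) • G.Λ) *ᵥ G.B j from by
        rw [GameData.Bhat, mexp_mulVec_mexp, mexp_mulVec_mexp,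
          show G.τ + (G.T - σ) + -G.τ = G.T - σ from by ring]]
      rw [smul_smul, smul_smul, ← neg_smul]
      simp only [hc]
      congr 1
      ring
    rw [intervalIntegral.integral_congr heq2]
    have hcont2 : Continuous fun σ : ℝ => -((1 / G.d j) •
        ((mexp ((G.T - σ) • G.Λ) * G.S j * mexp ((G.T - σ) • G.Λᵀ)) *ᵥ
          ((G.Lhat j).mulVec η))) := ((hqcont j).const_smul (1 / G.d j)).neg
    rw [mulVec_iint _ (hcont2.intervalIntegrable _ _), intervalIntegral.integral_neg,
      intervalIntegral.integral_smul]
    refine congrArg _ (congrArg _ (congrArg _ ?_))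
    rw [← Matrix.mulVec_mulVec]
    funext a
    rw [iint_apply ((hqcont j).intervalIntegrable _ _) a]
    show _ = _ ⬝ᵥ _
    simp only [Matrix.mulVec, dotProduct]
    rw [intervalIntegral.integral_finset_sum (fun b _ =>
      (Continuous.intervalIntegrable (by
        exact ((((Continuous.matrix_mul
          (Continuous.matrix_mul (mexp_cont' _ (continuous_const.sub continuous_id))
            continuous_const)
          (mexp_cont' _ (continuous_const.sub continuous_id))).matrix_elem a b)).mul
            continuous_const)) _ _))]
    refine Finset.sum_congr rfl fun b _ => ?_
    rw [intervalIntegral.integral_mul_const]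
    rfl
  have hterm : G.xtraj x0 u G.tf = ξ := by
    unfold GameData.xtraj
    simp_rw [mulVec_sum_smul]
    rw [intervalIntegral.integral_finset_sum (fun j _ => hIu j),
      Finset.sum_congr rfl fun j _ => hVj j]
    have hEsum : (∑ j : Fin n, mexp (G.τ • G.Λ) *ᵥ (-((1 / G.d j) • ((G.Psi j * G.Lhat j) *ᵥ η))))
        = mexp (G.τ • G.Λ) *ᵥ (∑ j : Fin n, -((1 / G.d j) • ((G.Psi j * G.Lhat j) *ᵥ η))) := by
      symm
      rw [show (mexp (G.τ • G.Λ)) *ᵥ (∑ j : Fin n, -((1 / G.d j) • ((G.Psi j * G.Lhat j) *ᵥ η)))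
          = (mexp (G.τ • G.Λ)).mulVecLin (∑ j : Fin n, -((1 / G.d j) •
            ((G.Psi j * G.Lhat j) *ᵥ η))) from rfl, map_sum]
      rfl
    rw [hEsum]
    simp_rw [← Matrix.smul_mulVec, ← Matrix.neg_mulVec]
    rw [← sum_mulVec]
    have hHsum : (∑ j : Fin n, -((1 / G.d j) • (G.Psi j * G.Lhat j))) = 1 - G.H := by
      have hH1 : G.H = 1 + ∑ j : Fin n, (1 / G.d j) • (G.Psi j * G.Lhat j) := rfl
      rw [Finset.sum_neg_distrib, hH1]
      abel
    rw [hHsum, Matrix.sub_mulVec, Matrix.one_mulVec]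
    have hHη : G.H *ᵥ η = (mexp (G.T • G.Λ)).mulVec x0 := by
      rw [hη, Matrix.mulVec_mulVec, hHinv, Matrix.one_mulVec]
    rw [hHη, Matrix.mulVec_sub, mexp_mulVec_mexp, hTτ, hξ]
    abel
  have hLsym : (G.L i)ᵀ = G.L i := by
    have h := (hPSD i).1
    simpa [Matrix.IsHermitian, Matrix.conjTranspose_eq_transpose_of_trivial] using h
  have hswap : ∀ y z : Fin n → ℝ, y ⬝ᵥ (G.L i *ᵥ z) = z ⬝ᵥ (G.L i *ᵥ y) := by
    intro y z
    have h1 : (G.L i *ᵥ y) ⬝ᵥ z = y ⬝ᵥ (G.L i *ᵥ z) := by rw [dot_shift, hLsym]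
    rw [← h1, dotProduct_comm]
  have hquad : (ξ + δ) ⬝ᵥ (G.L i *ᵥ (ξ + δ))
      = ξ ⬝ᵥ (G.L i *ᵥ ξ) + 2 * (δ ⬝ᵥ (G.L i *ᵥ ξ)) + δ ⬝ᵥ (G.L i *ᵥ δ) := by
    rw [Matrix.mulVec_add, dotProduct_add, add_dotProduct,
      add_dotProduct, hswap ξ δ]
    ring
  have hCu0 : 0 ≤ Cu := (abs_nonneg _).trans (hCu 0)
  have hCw0 : 0 ≤ Cv + Cu := (abs_nonneg _).trans (hwbd 0)
  have hIru2 : IntervalIntegrable (fun t => G.r i * u i (t - G.τ) ^ 2) volume 0 G.tf := by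
    refine (IIs _ ((humeas i).pow_const 2) (Cu ^ 2) (fun t => ?_) _ _).const_mul (G.r i)
    rw [abs_pow]
    exact pow_le_pow_left₀ (abs_nonneg _) (hCu _) 2
  have hIrw2 : IntervalIntegrable (fun t => G.r i * w (t - G.τ) ^ 2) volume 0 G.tf := by
    refine (IIs _ (hwτmeas.pow_const 2) ((Cv + Cu) ^ 2) (fun t => ?_) _ _).const_mul (G.r i)
    rw [abs_pow]
    exact pow_le_pow_left₀ (abs_nonneg _) (hwbd _) 2
  have hIruw : IntervalIntegrable (fun t => G.r i * (u i (t - G.τ) * w (t - G.τ)))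
      volume 0 G.tf := by
    refine (IIs _ ((humeas i).mul hwτmeas) (Cu * (Cv + Cu)) (fun t => ?_) _ _).const_mul (G.r i)
    rw [Pi.mul_apply, abs_mul]
    exact mul_le_mul (hCu _) (hwbd _) (abs_nonneg _) hCu0
  have hδLξ : δ ⬝ᵥ (G.L i *ᵥ ξ)
      = ∫ s in (0:ℝ)..G.tf, w (s - G.τ) * ((mexp ((G.tf - s) • G.Λ) *ᵥ G.B i) ⬝ᵥ (G.L i *ᵥ ξ)) := by
    rw [hδ, dotProduct_comm, dot_iint _ hIw]
    refine intervalIntegral.integral_congr fun s _ => ?_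
    show (G.L i *ᵥ ξ) ⬝ᵥ (w (s - G.τ) • _) = _
    rw [dotProduct_smul, smul_eq_mul, dotProduct_comm]
  have hcross : (1 / G.d i) * (δ ⬝ᵥ (G.L i *ᵥ ξ))
      = - ∫ t in (0:ℝ)..G.tf, G.r i * (u i (t - G.τ) * w (t - G.τ)) := by
    rw [hδLξ, ← intervalIntegral.integral_const_mul, ← intervalIntegral.integral_neg]
    refine intervalIntegral.integral_congr fun s hs => ?_
    rw [Set.uIcc_of_le htf0] at hs
    show (1 / G.d i) * _ = -(G.r i * _)
    by_cases hsτ : s < G.τ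
    · have hw0 : w (s - G.τ) = 0 := hwz _ (by linarith)
      simp [hw0]
    · have hTdef : G.T = G.tf - G.τ := rfl
      have ht : s - G.τ ∈ Set.Icc (0:ℝ) G.T := by
        constructor
        · have := not_lt.1 hsτ
          linarith
        · rw [hTdef]
          have := hs.2
          linarith
      have hui : u i (s - G.τ) = c i (s - G.τ) := by
        rw [hind i, Set.indicator_of_mem ht]
      have hdot : (mexp ((G.tf - s) • G.Λ) *ᵥ G.B i) ⬝ᵥ (G.L i *ᵥ ξ)
          = G.Bhat i ⬝ᵥ (mexp ((G.T - (s - G.τ)) • G.Λᵀ) *ᵥ ((G.Lhat i).mulVec η)) := by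
        have hLhat : (G.Lhat i).mulVec η = mexp (G.τ • G.Λᵀ) *ᵥ (G.L i *ᵥ ξ) := by
          rw [GameData.Lhat, ← Matrix.mulVec_mulVec, ← Matrix.mulVec_mulVec, ← hξ]
        rw [hLhat, GameData.Bhat, dot_shift, dot_shift, mexp_transpose, mexp_transpose,
          mexp_mulVec_mexp, mexp_mulVec_mexp]
        have harith : -G.τ + (G.T - (s - G.τ)) + G.τ = G.tf - s := by
          rw [hTdef]
          ring
        rw [harith]
      rw [hui, hdot]
      simp only [hc]
      have hrd : G.r i * (1 / (G.r i * G.d i)) = 1 / G.d i := by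
        field_simp
        simpa using mul_div_mul_left (1:ℝ) (G.d i) (ne_of_gt (hr i))
      generalize (G.Bhat i ⬝ᵥ (mexp ((G.T - (s - G.τ)) • G.Λᵀ) *ᵥ ((G.Lhat i).mulVec η))) = K
      linear_combination (-(K * w (s - G.τ))) * hrd
  have hJu : G.J x0 i (Function.update u i v) = G.J x0 i u
      + ((1 / G.d i) * (δ ⬝ᵥ (G.L i *ᵥ δ)) + ∫ t in (0:ℝ)..G.tf, G.r i * w (t - G.τ) ^ 2) := by
    unfold GameData.J
    rw [hXP, hterm]
    simp only [Function.update_self]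
    have hsplit : (∫ t in (0:ℝ)..G.tf, G.r i * v (t - G.τ) ^ 2)
        = (∫ t in (0:ℝ)..G.tf, G.r i * u i (t - G.τ) ^ 2)
          + ((∫ t in (0:ℝ)..G.tf, G.r i * w (t - G.τ) ^ 2)
            + 2 * ∫ t in (0:ℝ)..G.tf, G.r i * (u i (t - G.τ) * w (t - G.τ))) := by
      rw [← intervalIntegral.integral_const_mul,
        ← intervalIntegral.integral_add hIrw2 (hIruw.const_mul 2),
        ← intervalIntegral.integral_add hIru2 (hIrw2.add (hIruw.const_mul 2))]
      refine intervalIntegral.integral_congr fun t _ => ?_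
      show G.r i * v (t - G.τ) ^ 2 = _
      have hvw : v (t - G.τ) = u i (t - G.τ) + w (t - G.τ) := by simp [hw]
      rw [hvw]
      ring
    rw [hsplit, hquad]
    linear_combination (2:ℝ) * hcross
  rw [hJu]
  have h1 : 0 ≤ (1 / G.d i) * (δ ⬝ᵥ (G.L i *ᵥ δ)) := by
    refine mul_nonneg (one_div_nonneg.2 (hd i).le) ?_
    have := (hPSD i).dotProduct_mulVec_nonneg δ
    simpa using this
  have h2 : 0 ≤ ∫ t in (0:ℝ)..G.tf, G.r i * w (t - G.τ) ^ 2 :=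
    intervalIntegral.integral_nonneg htf0 (fun t _ => mul_nonneg (hr i).le (sq_nonneg _))
  linarith
end
end

section
/- Let x_0 ∈ ℝⁿ and let u* = (u*_1,…,u*_n) be an admissible control profile of the delay-free game with trajectory y* = y_{u*} from y_0 = x_0. If for every player i and almost every t ∈ [0,T] one has u*_i(t) = −(1/r_i)·B̂_iᵀ·exp((T−t)Λᵀ)·( (Ŵ_i + ((1−ω_i)/d_i)·L̂_i)·y*(T) − exp(τΛᵀ)·W_i·x_0 ), then u* is an open-loop Nash equilibrium of the stubborn delay-free game with costs J̃̂_i. -/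
open Matrix MeasureTheory
open scoped Matrix

noncomputable section

namespace OLHelp

variable {n : ℕ}

lemma cont_mexp (Λ : Matrix (Fin n) (Fin n) ℝ) (T' : ℝ) :
    Continuous fun s : ℝ => mexp ((T' - s) • Λ) := by
  letI : SeminormedRing (Matrix (Fin n) (Fin n) ℝ) := Matrix.linftyOpSemiNormedRing
  letI : NormedRing (Matrix (Fin n) (Fin n) ℝ) := Matrix.linftyOpNormedRing
  letI : NormedAlgebra ℝ (Matrix (Fin n) (Fin n) ℝ) := Matrix.linftyOpNormedAlgebra
  letI : NormedAlgebra ℚ (Matrix (Fin n) (Fin n) ℝ) := NormedAlgebra.restrictScalars ℚ ℝ _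
  exact (NormedSpace.exp_continuous (𝔸 := Matrix (Fin n) (Fin n) ℝ)).comp
    ((continuous_const.sub continuous_id).smul continuous_const)

lemma cont_mulVec {g : ℝ → Matrix (Fin n) (Fin n) ℝ} (hg : Continuous g) (c : Fin n → ℝ) :
    Continuous fun s => (g s).mulVec c := by
  apply continuous_pi
  intro a
  simp only [Matrix.mulVec, dotProduct]
  exact continuous_finset_sum _ fun b _ => (hg.matrix_elem a b).mul continuous_const

lemma mexp_transpose (A : Matrix (Fin n) (Fin n) ℝ) : mexp Aᵀ = (mexp A)ᵀ :=
  Matrix.exp_transpose A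

lemma II_bdd {f : ℝ → ℝ} (hm : Measurable f) (hb : ∃ C, ∀ s, |f s| ≤ C) (a b : ℝ) :
    IntervalIntegrable f volume a b := by
  obtain ⟨C, hC⟩ := hb
  rw [intervalIntegrable_iff]
  constructor
  · exact hm.aestronglyMeasurable
  · haveI : IsFiniteMeasure (volume.restrict (Set.uIoc a b)) :=
      ⟨by rw [Measure.restrict_apply_univ]
          exact (measure_mono Set.uIoc_subset_uIcc).trans_lt isCompact_uIcc.measure_lt_top⟩
    apply MeasureTheory.HasFiniteIntegral.of_bounded (C := C)
    exact ae_of_all _ fun s => by simpa using hC s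

lemma integrableOn_bdd {f : ℝ → ℝ} (hm : Measurable f) (hb : ∃ C, ∀ s, |f s| ≤ C)
    (a b : ℝ) : IntegrableOn f (Set.uIcc a b) volume := by
  obtain ⟨C, hC⟩ := hb
  constructor
  · exact hm.aestronglyMeasurable
  · haveI : IsFiniteMeasure (volume.restrict (Set.uIcc a b)) :=
      ⟨by rw [Measure.restrict_apply_univ]; exact isCompact_uIcc.measure_lt_top⟩
    apply MeasureTheory.HasFiniteIntegral.of_bounded (C := C)
    exact ae_of_all _ fun s => by simpa using hC s

lemma II_smul {f : ℝ → ℝ} (hm : Measurable f) (hb : ∃ C, ∀ s, |f s| ≤ C)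
    {g : ℝ → (Fin n → ℝ)} (hg : Continuous g) (a b : ℝ) :
    IntervalIntegrable (fun s => f s • g s) volume a b := by
  rw [intervalIntegrable_iff]
  exact ((integrableOn_bdd hm hb a b).smul_continuousOn hg.continuousOn
    isCompact_uIcc).mono_set Set.uIoc_subset_uIcc

lemma bdd_mul {f h : ℝ → ℝ} (hf : ∃ C, ∀ s, |f s| ≤ C) (hh : ∃ C, ∀ s, |h s| ≤ C) :
    ∃ C, ∀ s, |f s * h s| ≤ C := by
  obtain ⟨C, hC⟩ := hf
  obtain ⟨D, hD⟩ := hh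
  exact ⟨C * D, fun s => by
    rw [abs_mul]
    exact mul_le_mul (hC s) (hD s) (abs_nonneg _) ((abs_nonneg _).trans (hC s))⟩

lemma bdd_sub {f h : ℝ → ℝ} (hf : ∃ C, ∀ s, |f s| ≤ C) (hh : ∃ C, ∀ s, |h s| ≤ C) :
    ∃ C, ∀ s, |f s - h s| ≤ C := by
  obtain ⟨C, hC⟩ := hf
  obtain ⟨D, hD⟩ := hh
  exact ⟨C + D, fun s => (abs_sub _ _).trans (add_le_add (hC s) (hD s))⟩

def dotCLM (q : Fin n → ℝ) : (Fin n → ℝ) →L[ℝ] ℝ :=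
  ∑ a, q a • ContinuousLinearMap.proj a

lemma dotCLM_apply (q x : Fin n → ℝ) : dotCLM q x = x ⬝ᵥ q := by
  simp [dotCLM, dotProduct, mul_comm]

lemma dot_symm (L : Matrix (Fin n) (Fin n) ℝ) (hLs : Lᵀ = L) (x y : Fin n → ℝ) :
    x ⬝ᵥ L.mulVec y = y ⬝ᵥ L.mulVec x := by
  calc x ⬝ᵥ L *ᵥ y = (x ᵥ* L) ⬝ᵥ y := Matrix.dotProduct_mulVec x L y
    _ = (Lᵀ *ᵥ x) ⬝ᵥ y := by rw [Matrix.mulVec_transpose]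
    _ = (L *ᵥ x) ⬝ᵥ y := by rw [hLs]
    _ = y ⬝ᵥ L *ᵥ x := dotProduct_comm _ _

lemma dot_transpose (A : Matrix (Fin n) (Fin n) ℝ) (x q : Fin n → ℝ) :
    A.mulVec x ⬝ᵥ q = x ⬝ᵥ Aᵀ.mulVec q := by
  rw [Matrix.dotProduct_mulVec, Matrix.vecMul_transpose, dotProduct_comm]

lemma dotT (M : Matrix (Fin n) (Fin n) ℝ) (z w : Fin n → ℝ) :
    z ⬝ᵥ Mᵀ.mulVec w = M.mulVec z ⬝ᵥ w := by
  rw [Matrix.dotProduct_mulVec, Matrix.vecMul_transpose]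

lemma conjdot (M A : Matrix (Fin n) (Fin n) ℝ) (z z' : Fin n → ℝ) :
    z ⬝ᵥ (Mᵀ * A * M).mulVec z' = M.mulVec z ⬝ᵥ A.mulVec (M.mulVec z') := by
  rw [← Matrix.mulVec_mulVec, ← Matrix.mulVec_mulVec, dotT]

lemma std_dot (i : Fin n) (ω : ℝ) (z z' : Fin n → ℝ) :
    z ⬝ᵥ (Matrix.single i i ω).mulVec z' = ω * (z i * z' i) := by
  simp [dotProduct, Matrix.mulVec, Matrix.single, ite_and, Finset.mul_sum,
    mul_ite, ite_mul, mul_zero, zero_mul, Finset.sum_ite_eq, Finset.sum_ite_eq']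
  ring

end OLHelp

set_option maxHeartbeats 1000000 in
/-- Sufficiency of the Pontryagin condition in the stubborn delay-free game: if an
admissible profile `u` with trajectory `y* = y_u` from `y₀ = x₀` satisfies, for every
player `i` and almost every `t ∈ [0,T]`,
`uᵢ(t) = −(1/rᵢ)·B̂ᵢᵀ·exp((T−t)Λᵀ)·((Ŵᵢ + ((1−ωᵢ)/dᵢ)·L̂ᵢ)·y*(T) − exp(τΛᵀ)·Wᵢ·x₀)`,
then `u` is an open-loop Nash equilibrium of the stubborn delay-free game. -/
theorem statement_13 {n : ℕ} (G : GameData n) (hG : G.Valid) (x0 : Fin n → ℝ)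
    (u : Fin n → ℝ → ℝ) (hu : ∀ i, AdmissibleF (u i))
    (hopt : ∀ i, ∀ᵐ t ∂(volume.restrict (Set.Icc (0:ℝ) G.T)),
      u i t = -(1 / G.r i) *
        (G.Bhat i ⬝ᵥ (mexp ((G.T - t) • G.Λᵀ)).mulVec
          ((G.What i + ((1 - G.ω i) / G.d i) • G.Lhat i).mulVec (G.ytraj x0 u G.T) -
            (mexp (G.τ • G.Λᵀ)).mulVec ((G.W i).mulVec x0)))) :
    G.NashStubF x0 x0 u := by
  obtain ⟨hτ, hτf, hr, hd, hL, hω⟩ := hG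
  have hT : (0:ℝ) ≤ G.T := by
    have : G.τ < G.tf := hτf
    simp only [GameData.T]; linarith
  refine ⟨hu, fun i v hv => ?_⟩
  set T := G.T with hTdef
  have hrpos := hr i
  have hωnn := (hω i).1
  have hω1 := (hω i).2
  have hcnn : 0 ≤ (1 - G.ω i) / G.d i := div_nonneg (by linarith) (hd i).le
  set M : Matrix (Fin n) (Fin n) ℝ := mexp (G.τ • G.Λ) with hMdef
  have hMT : mexp (G.τ • G.Λᵀ) = Mᵀ := by
    rw [hMdef, ← OLHelp.mexp_transpose, Matrix.transpose_smul]
  -- the control deviation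
  set w : ℝ → ℝ := fun s => v s - u i s with hwdef
  have hwm : Measurable w := hv.1.sub (hu i).1
  have hwb : ∃ C, ∀ s, |w s| ≤ C := OLHelp.bdd_sub hv.2 (hu i).2
  -- continuity of the fundamental matrix
  have hgc : Continuous fun s : ℝ => mexp ((T - s) • G.Λ) := OLHelp.cont_mexp G.Λ T
  -- integrability of the vector integrands
  have hIIk : ∀ f : ℝ → ℝ, Measurable f → (∃ C, ∀ s, |f s| ≤ C) → ∀ cv : Fin n → ℝ,
      IntervalIntegrable (fun s => f s • (mexp ((T - s) • G.Λ)).mulVec cv) volume 0 T :=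
    fun f hm hb cv => OLHelp.II_smul hm hb (OLHelp.cont_mulVec hgc cv) 0 T
  have hII_prof : ∀ p : Fin n → ℝ → ℝ, (∀ j, AdmissibleF (p j)) →
      IntervalIntegrable (fun s => ∑ j, p j s • (mexp ((T - s) • G.Λ)).mulVec (G.Bhat j))
        volume 0 T :=
    by
    intro p hp
    have h5 := IntervalIntegrable.sum (μ := volume) (a := (0:ℝ)) (b := T) Finset.univ
      (f := fun j (s : ℝ) => p j s • (mexp ((T - s) • G.Λ)).mulVec (G.Bhat j))
      (fun j _ => hIIk _ (hp j).1 (hp j).2 _)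
    have heq : (∑ j : Fin n, fun s : ℝ => p j s • (mexp ((T - s) • G.Λ)).mulVec (G.Bhat j))
        = fun s : ℝ => ∑ j : Fin n, p j s • (mexp ((T - s) • G.Λ)).mulVec (G.Bhat j) := by
      funext s
      simp [Finset.sum_apply]
    rwa [heq] at h5
  -- trajectory in expanded form
  have htraj : ∀ p : Fin n → ℝ → ℝ, G.ytraj x0 p T =
      (mexp (T • G.Λ)).mulVec x0 +
        ∫ s in (0:ℝ)..T, ∑ j, p j s • (mexp ((T - s) • G.Λ)).mulVec (G.Bhat j) := by
    intro p
    simp only [GameData.ytraj]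
    congr 1
    apply intervalIntegral.integral_congr
    intro s _
    show (mexp ((T - s) • G.Λ)).mulVec (∑ j, p j s • G.Bhat j) = _
    rw [show (mexp ((T - s) • G.Λ)).mulVec (∑ j, p j s • G.Bhat j)
        = (mexp ((T - s) • G.Λ)).mulVecLin (∑ j, p j s • G.Bhat j) from rfl, map_sum]
    simp [Matrix.mulVecLin_apply, Matrix.mulVec_smul]
  -- the deviated profile is admissible
  have hadm' : ∀ j, AdmissibleF (Function.update u i v j) := by
    intro j
    rcases eq_or_ne j i with rfl | h
    · simpa using hv
    · rw [Function.update_of_ne h]; exact hu j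
  -- the perturbation of the terminal state
  have hIIw : IntervalIntegrable (fun s => w s • (mexp ((T - s) • G.Λ)).mulVec (G.Bhat i))
      volume 0 T := hIIk w hwm hwb _
  set δ : Fin n → ℝ := ∫ s in (0:ℝ)..T, w s • (mexp ((T - s) • G.Λ)).mulVec (G.Bhat i)
    with hδdef
  set y : Fin n → ℝ := G.ytraj x0 u T with hydef
  have hy' : G.ytraj x0 (Function.update u i v) T = y + δ := by
    rw [hydef, htraj _, htraj _, add_assoc]
    congr 1
    rw [hδdef, ← intervalIntegral.integral_add (hII_prof u hu) hIIw]
    apply intervalIntegral.integral_congr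
    intro s _
    dsimp only
    have hsplit : ∀ p : Fin n → ℝ → ℝ,
        (∑ j, p j s • (mexp ((T - s) • G.Λ)).mulVec (G.Bhat j)) =
        (∑ j ∈ Finset.univ \ {i}, p j s • (mexp ((T - s) • G.Λ)).mulVec (G.Bhat j)) +
          p i s • (mexp ((T - s) • G.Λ)).mulVec (G.Bhat i) :=
      fun p => Finset.sum_eq_sum_sdiff_singleton_add (Finset.mem_univ i) _
    rw [hsplit, hsplit u]
    have hupd : ∀ j ∈ Finset.univ \ {i},
        Function.update u i v j s • (mexp ((T - s) • G.Λ)).mulVec (G.Bhat j) =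
        u j s • (mexp ((T - s) • G.Λ)).mulVec (G.Bhat j) := by
      intro j hj
      rw [Function.update_of_ne (by simpa using (Finset.mem_sdiff.mp hj).2)]
    rw [Finset.sum_congr rfl hupd, Function.update_self]
    have hws : w s = v s - u i s := rfl
    rw [hws, sub_smul]
    module
  -- the adjoint-type vector q
  set q : Fin n → ℝ :=
    (G.What i + ((1 - G.ω i) / G.d i) • G.Lhat i).mulVec y -
      (mexp (G.τ • G.Λᵀ)).mulVec ((G.W i).mulVec x0) with hqdef
  -- δ ⬝ᵥ q as an integral
  have hδq : δ ⬝ᵥ q =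
      ∫ s in (0:ℝ)..T, w s * ((mexp ((T - s) • G.Λ)).mulVec (G.Bhat i) ⬝ᵥ q) := by
    have h1 := (OLHelp.dotCLM q).intervalIntegral_comp_comm hIIw
    simp only [OLHelp.dotCLM_apply, smul_dotProduct, smul_eq_mul] at h1
    exact h1.symm
  -- rewrite the integrand using the transpose
  have hXq : ∀ s : ℝ, (mexp ((T - s) • G.Λ)).mulVec (G.Bhat i) ⬝ᵥ q =
      G.Bhat i ⬝ᵥ (mexp ((T - s) • G.Λᵀ)).mulVec q := by
    intro s
    rw [OLHelp.dot_transpose]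
    congr 2
    rw [← Matrix.transpose_smul, OLHelp.mexp_transpose]
  -- the optimality condition a.e.
  have hae : ∀ᵐ s ∂volume, s ∈ Set.uIoc 0 T →
      w s * ((mexp ((T - s) • G.Λ)).mulVec (G.Bhat i) ⬝ᵥ q) = w s * (-(G.r i) * u i s) := by
    have h0 := (ae_restrict_iff' measurableSet_Icc).mp (hopt i)
    filter_upwards [h0] with s hs hmem
    have hsIcc : s ∈ Set.Icc (0:ℝ) T := by
      rw [Set.uIoc_of_le hT] at hmem
      exact Set.Ioc_subset_Icc_self hmem
    have h2 := hs hsIcc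
    rw [hXq s, h2, hqdef]
    have hr0 : G.r i ≠ 0 := ne_of_gt hrpos
    field_simp
  have hIwu : IntervalIntegrable (fun s => w s * u i s) volume 0 T :=
    OLHelp.II_bdd (hwm.mul (hu i).1) (OLHelp.bdd_mul hwb (hu i).2) 0 T
  have hδq2 : δ ⬝ᵥ q = -(G.r i) * ∫ s in (0:ℝ)..T, w s * u i s := by
    rw [hδq, intervalIntegral.integral_congr_ae hae, ← intervalIntegral.integral_const_mul]
    apply intervalIntegral.integral_congr
    intro s _
    ring
  -- quadratic-form computations
  have hWdot : ∀ z z' : Fin n → ℝ, z ⬝ᵥ (G.W i).mulVec z' = G.ω i * (z i * z' i) := by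
    intro z z'
    simp only [GameData.W]
    exact OLHelp.std_dot i (G.ω i) z z'
  have hLconj : ∀ z z' : Fin n → ℝ,
      z ⬝ᵥ (G.Lhat i).mulVec z' = M.mulVec z ⬝ᵥ (G.L i).mulVec (M.mulVec z') := by
    intro z z'
    simp only [GameData.Lhat, hMT, ← hMdef]
    exact OLHelp.conjdot M (G.L i) z z'
  have hLt : (G.L i)ᵀ = G.L i := by
    have h3 := (hL i).1
    rwa [Matrix.IsHermitian, Matrix.conjTranspose_eq_transpose_of_trivial] at h3
  have hLsym : ∀ z z' : Fin n → ℝ,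
      z ⬝ᵥ (G.Lhat i).mulVec z' = z' ⬝ᵥ (G.Lhat i).mulVec z := by
    intro z z'
    rw [hLconj, hLconj, OLHelp.dot_symm _ hLt]
  have hLnn : ∀ z : Fin n → ℝ, 0 ≤ z ⬝ᵥ (G.Lhat i).mulVec z := by
    intro z
    rw [hLconj]
    have h4 := (hL i).dotProduct_mulVec_nonneg (M.mulVec z)
    simpa using h4
  have hWconj : ∀ z z' : Fin n → ℝ,
      z ⬝ᵥ (G.What i).mulVec z' = G.ω i * ((M.mulVec z) i * (M.mulVec z') i) := by
    intro z z'
    simp only [GameData.What, hMT, ← hMdef]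
    rw [OLHelp.conjdot M (G.W i), hWdot]
  -- scalar abbreviations
  set A : ℝ := (M.mulVec y - x0) i with hAdef
  set bb : ℝ := (M.mulVec δ) i with hbbdef
  set Lyy : ℝ := y ⬝ᵥ (G.Lhat i).mulVec y with hLyy
  set Lδy : ℝ := δ ⬝ᵥ (G.Lhat i).mulVec y with hLδy
  set Lδδ : ℝ := δ ⬝ᵥ (G.Lhat i).mulVec δ with hLδδ
  set Iu2 : ℝ := ∫ s in (0:ℝ)..T, u i s ^ 2 with hIu2
  set Iw2 : ℝ := ∫ s in (0:ℝ)..T, w s ^ 2 with hIw2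
  set Iwu : ℝ := ∫ s in (0:ℝ)..T, w s * u i s with hIwu2
  -- δ ⬝ᵥ q in closed form
  have hδq3 : δ ⬝ᵥ q = G.ω i * (bb * (M.mulVec y) i) + ((1 - G.ω i) / G.d i) * Lδy -
      G.ω i * (bb * x0 i) := by
    rw [hqdef, dotProduct_sub, Matrix.add_mulVec, dotProduct_add,
      Matrix.smul_mulVec, dotProduct_smul, smul_eq_mul, hWconj, hMT,
      OLHelp.dotT, hWdot]
  have hcross : G.ω i * (bb * A) + ((1 - G.ω i) / G.d i) * Lδy = -(G.r i * Iwu) := by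
    have hbig : G.ω i * (bb * (M.mulVec y) i) + ((1 - G.ω i) / G.d i) * Lδy -
        G.ω i * (bb * x0 i) = -(G.r i) * Iwu := hδq3.symm.trans hδq2
    have hA : A = (M.mulVec y) i - x0 i := by rw [hAdef, Pi.sub_apply]
    linear_combination hbig + (G.ω i * bb) * hA
  -- integrability of the scalar pieces
  have hII_u2 : IntervalIntegrable (fun s => u i s ^ 2) volume 0 T := by
    apply OLHelp.II_bdd ((hu i).1.pow_const 2)
    obtain ⟨C, hC⟩ := OLHelp.bdd_mul (hu i).2 (hu i).2
    exact ⟨C, fun s => by rw [sq]; exact hC s⟩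
  have hII_w2 : IntervalIntegrable (fun s => w s ^ 2) volume 0 T := by
    apply OLHelp.II_bdd (hwm.pow_const 2)
    obtain ⟨C, hC⟩ := OLHelp.bdd_mul hwb hwb
    exact ⟨C, fun s => by rw [sq]; exact hC s⟩
  -- decomposition of the control cost of the deviation
  have hIv2 : (∫ s in (0:ℝ)..T, v s ^ 2) = Iw2 + 2 * Iwu + Iu2 := by
    have hpt : ∀ s : ℝ, v s ^ 2 = w s ^ 2 + ((2 : ℝ) * (w s * u i s) + u i s ^ 2) := by
      intro s
      have hws : w s = v s - u i s := rfl
      rw [hws]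
      ring
    rw [intervalIntegral.integral_congr (g := fun s => w s ^ 2 + (2 * (w s * u i s) + u i s ^ 2))
      (fun s _ => hpt s)]
    rw [intervalIntegral.integral_add hII_w2 ((hIwu.const_mul 2).add hII_u2),
      intervalIntegral.integral_add (hIwu.const_mul 2) hII_u2,
      intervalIntegral.integral_const_mul]
    ring
  -- the two cost values
  have hrint : ∀ f : ℝ → ℝ, (∫ s in (0:ℝ)..T, G.r i * f s ^ 2) =
      G.r i * ∫ s in (0:ℝ)..T, f s ^ 2 := fun f => intervalIntegral.integral_const_mul _ _
  have e1 : G.JstubF x0 x0 i u = G.ω i * (A * A) + ((1 - G.ω i) / G.d i) * Lyy +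
      G.r i * Iu2 := by
    simp only [GameData.JstubF, ← hTdef, ← hydef, ← hMdef]
    rw [hWdot, hrint]
  have e2 : G.JstubF x0 x0 i (Function.update u i v) =
      G.ω i * ((A + bb) * (A + bb)) +
        ((1 - G.ω i) / G.d i) * (Lyy + 2 * Lδy + Lδδ) +
        G.r i * (Iw2 + 2 * Iwu + Iu2) := by
    simp only [GameData.JstubF, ← hTdef, ← hMdef, hy', Function.update_self]
    rw [hWdot, hrint, hIv2]
    have hcomp : (M.mulVec (y + δ) - x0) i = A + bb := by
      rw [Matrix.mulVec_add, hAdef, hbbdef]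
      simp only [Pi.sub_apply, Pi.add_apply]
      ring
    rw [hcomp]
    have hLexp : (y + δ) ⬝ᵥ (G.Lhat i).mulVec (y + δ) = Lyy + 2 * Lδy + Lδδ := by
      rw [Matrix.mulVec_add, dotProduct_add, add_dotProduct,
        add_dotProduct, hLsym y δ]
      rw [hLyy, hLδy, hLδδ]
      ring
    rw [hLexp]
  rw [e1, e2]
  have hIw2nn : 0 ≤ Iw2 :=
    intervalIntegral.integral_nonneg hT fun s _ => sq_nonneg _
  have hLδδnn : 0 ≤ Lδδ := hLnn δ
  have hKey : G.ω i * ((A + bb) * (A + bb)) +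
      ((1 - G.ω i) / G.d i) * (Lyy + 2 * Lδy + Lδδ) + G.r i * (Iw2 + 2 * Iwu + Iu2) =
      (G.ω i * (A * A) + ((1 - G.ω i) / G.d i) * Lyy + G.r i * Iu2) +
        (G.ω i * (bb * bb) + ((1 - G.ω i) / G.d i) * Lδδ + G.r i * Iw2) := by
    linear_combination 2 * hcross
  rw [hKey]
  have hpos : 0 ≤ G.ω i * (bb * bb) + ((1 - G.ω i) / G.d i) * Lδδ + G.r i * Iw2 :=
    add_nonneg (add_nonneg (mul_nonneg hωnn (mul_self_nonneg bb))
      (mul_nonneg hcnn hLδδnn)) (mul_nonneg hrpos.le hIw2nn)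
  linarith
end
end

section
/- Let x_0 ∈ ℝⁿ and suppose y : [0,T] → ℝⁿ satisfies the integral equation y(t) = exp(tΛ)·x_0 − ∑_{j=1}^n ( ∫₀ᵗ exp((t−s)Λ)·S_j·exp((T−s)Λᵀ) ds )·( (Ŵ_j + ((1−ω_j)/d_j)·L̂_j)·y(T) − exp(τΛᵀ)·W_j·x_0 ) for all t ∈ [0,T]. Then Ĥ·y(T) = exp(TΛ)·x_0 + ∑_{j=1}^n Ψ_j·exp(τΛᵀ)·W_j·x_0. Consequently, if Ĥ is invertible, then y(T) = Ĥ⁻¹·( exp(TΛ)·x_0 + ∑_{j=1}^n Ψ_j·exp(τΛᵀ)·W_j·x_0 ), and there is exactly one function y satisfying the integral equation. -/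
open Matrix MeasureTheory
open scoped Matrix

noncomputable section

private lemma sum_mulVec_aux {n : ℕ} (f : Fin n → Matrix (Fin n) (Fin n) ℝ)
    (v : Fin n → ℝ) : (∑ j : Fin n, f j).mulVec v = ∑ j : Fin n, (f j).mulVec v := by
  ext i
  simp only [Matrix.mulVec, dotProduct, Finset.sum_apply, Matrix.sum_apply, Finset.sum_mul]
  rw [Finset.sum_comm]

/-- If `y : [0,T] → ℝⁿ` satisfies the stubborn integral equation
`y(t) = exp(tΛ)·x₀ − ∑ⱼ (∫₀ᵗ exp((t−s)Λ)·Sⱼ·exp((T−s)Λᵀ) ds)·((Ŵⱼ + ((1−ωⱼ)/dⱼ)·L̂ⱼ)·y(T) − exp(τΛᵀ)·Wⱼ·x₀)`,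
then `Ĥ·y(T) = exp(TΛ)·x₀ + ∑ⱼ Ψⱼ·exp(τΛᵀ)·Wⱼ·x₀`; consequently if `Ĥ` is invertible then
`y(T) = Ĥ⁻¹·(exp(TΛ)·x₀ + ∑ⱼ Ψⱼ·exp(τΛᵀ)·Wⱼ·x₀)` and the solution is unique. -/
theorem statement_14 {n : ℕ} (G : GameData n) (hG : G.Valid) (x0 : Fin n → ℝ)
    (y : ℝ → Fin n → ℝ)
    (hy : ∀ t ∈ Set.Icc (0:ℝ) G.T, y t =
      (mexp (t • G.Λ)).mulVec x0 -
        ∑ j : Fin n, (G.Phi G.T j t).mulVec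
          ((G.What j + ((1 - G.ω j) / G.d j) • G.Lhat j).mulVec (y G.T) -
            (mexp (G.τ • G.Λᵀ)).mulVec ((G.W j).mulVec x0))) :
    G.Hhat.mulVec (y G.T) =
      (mexp (G.T • G.Λ)).mulVec x0 +
        ∑ j : Fin n, (G.Psi j).mulVec ((mexp (G.τ • G.Λᵀ)).mulVec ((G.W j).mulVec x0)) ∧
      (IsUnit G.Hhat →
        y G.T = G.Hhat⁻¹.mulVec
          ((mexp (G.T • G.Λ)).mulVec x0 +
            ∑ j : Fin n,
              (G.Psi j).mulVec ((mexp (G.τ • G.Λᵀ)).mulVec ((G.W j).mulVec x0))) ∧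
          ∀ z : ℝ → Fin n → ℝ,
            (∀ t ∈ Set.Icc (0:ℝ) G.T, z t =
              (mexp (t • G.Λ)).mulVec x0 -
                ∑ j : Fin n, (G.Phi G.T j t).mulVec
                  ((G.What j + ((1 - G.ω j) / G.d j) • G.Lhat j).mulVec (z G.T) -
                    (mexp (G.τ • G.Λᵀ)).mulVec ((G.W j).mulVec x0))) →
            ∀ t ∈ Set.Icc (0:ℝ) G.T, z t = y t) := by
  obtain ⟨hτ, hτtf, -⟩ := hG
  have hTmem : G.T ∈ Set.Icc (0:ℝ) G.T :=
    ⟨by simp only [GameData.T]; linarith, le_rfl⟩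
  set a := (mexp (G.T • G.Λ)).mulVec x0 with ha
  set M := fun j : Fin n => G.What j + ((1 - G.ω j) / G.d j) • G.Lhat j with hM
  set w := fun j : Fin n => (mexp (G.τ • G.Λᵀ)).mulVec ((G.W j).mulVec x0) with hw
  have key : ∀ v : Fin n → ℝ,
      v = a - ∑ j : Fin n, (G.Psi j).mulVec ((M j).mulVec v - w j) →
      G.Hhat.mulVec v = a + ∑ j : Fin n, (G.Psi j).mulVec (w j) := by
    intro v hv
    have h1 : G.Hhat.mulVec v = v + ∑ j : Fin n, (G.Psi j).mulVec ((M j).mulVec v) := by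
      rw [GameData.Hhat, Matrix.add_mulVec, Matrix.one_mulVec, sum_mulVec_aux]
      simp only [← Matrix.mulVec_mulVec, hM]
    have h2 : ∀ j : Fin n, (G.Psi j).mulVec ((M j).mulVec v - w j) =
        (G.Psi j).mulVec ((M j).mulVec v) - (G.Psi j).mulVec (w j) := fun j =>
      Matrix.mulVec_sub _ _ _
    set tt := ∑ j : Fin n, (G.Psi j).mulVec ((M j).mulVec v) with htt
    set ss := ∑ j : Fin n, (G.Psi j).mulVec (w j) with hss
    have hv' : v = a - (tt - ss) := by
      rw [hv]; simp only [h2, Finset.sum_sub_distrib, htt, hss]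
    rw [h1, hv']
    abel
  have hyT : G.Hhat.mulVec (y G.T) = a + ∑ j : Fin n, (G.Psi j).mulVec (w j) := by
    apply key
    have := hy G.T hTmem
    simpa [GameData.Psi, hM, hw, ha] using this
  refine ⟨hyT, fun hu => ?_⟩
  have hdet : IsUnit G.Hhat.det := (Matrix.isUnit_iff_isUnit_det _).mp hu
  have hinv : ∀ v : Fin n → ℝ, G.Hhat⁻¹.mulVec (G.Hhat.mulVec v) = v := by
    intro v
    rw [Matrix.mulVec_mulVec, Matrix.nonsing_inv_mul _ hdet, Matrix.one_mulVec]
  have hyTval : y G.T = G.Hhat⁻¹.mulVec (a + ∑ j : Fin n, (G.Psi j).mulVec (w j)) := by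
    rw [← hyT, hinv]
  refine ⟨hyTval, fun z hz => ?_⟩
  have hzT : G.Hhat.mulVec (z G.T) = a + ∑ j : Fin n, (G.Psi j).mulVec (w j) := by
    apply key
    have := hz G.T hTmem
    simpa [GameData.Psi, hM, hw, ha] using this
  have hzTval : z G.T = y G.T := by
    rw [hyTval, ← hzT, hinv]
  intro t ht
  rw [hy t ht, hz t ht, hzTval]
end
end

section
/- (Theorem 2, trajectory part.) Assume Ĥ is invertible and let x_0 ∈ ℝⁿ. Set z = Ĥ⁻¹·( exp(TΛ)·x_0 + ∑_{j=1}^n Ψ_j·exp(τΛᵀ)·W_j·x_0 ), and let u* be the profile with u*_i(t) = −(1/r_i)·B̂_iᵀ·exp((T−t)Λᵀ)·( (Ŵ_i + ((1−ω_i)/d_i)·L̂_i)·z − exp(τΛᵀ)·W_i·x_0 ) for t ∈ [0,T] and u*_i(t) = 0 for t ∉ [0,T]. Then its trajectory x* = x_{u*} from x_0 satisfies x*(τ) = exp(τΛ)·x_0 and, for every t ∈ [0,T], x*(t+τ) = exp(tΛ)·x*(τ) − exp(τΛ)·∑_{j=1}^n ( ∫₀ᵗ exp((t−s)Λ)·S_j·exp((T−s)Λᵀ)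 ds )·( (Ŵ_j + ((1−ω_j)/d_j)·L̂_j)·z − exp(τΛᵀ)·W_j·x_0 ). -/
open Matrix MeasureTheory
open scoped Matrix

noncomputable section

section AuxLemmas

open intervalIntegral

theorem aux_vecMulVec_mulVec {n : ℕ} (a b v : Fin n → ℝ) :
    (vecMulVec a b).mulVec v = (b ⬝ᵥ v) • a := by
  ext i
  simp only [vecMulVec, mulVec, dotProduct, of_apply, Pi.smul_apply, smul_eq_mul,
    Finset.sum_mul, Finset.mul_sum]
  exact Finset.sum_congr rfl fun j _ => by ring

section NormAux

attribute [local instance] Matrix.linftyOpNormedRing Matrix.linftyOpNormedAlgebra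

theorem aux_mexp_add {n : ℕ} (a b : ℝ) (Λ : Matrix (Fin n) (Fin n) ℝ) :
    mexp ((a + b) • Λ) = mexp (a • Λ) * mexp (b • Λ) := by
  rw [add_smul]
  exact Matrix.exp_add_of_commute _ _ (((Commute.refl Λ).smul_left a).smul_right b)

theorem aux_mexp_continuous {n : ℕ} (Λ : Matrix (Fin n) (Fin n) ℝ) :
    Continuous (fun s : ℝ => mexp (s • Λ)) :=
  (NormedSpace.exp_continuous (𝔸 := Matrix (Fin n) (Fin n) ℝ)).comp (continuous_id.smul continuous_const)

end NormAux

theorem aux_mexp_comm {n : ℕ} (a b : ℝ) (Λ : Matrix (Fin n) (Fin n) ℝ) :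
    mexp (a • Λ) * mexp (b • Λ) = mexp (b • Λ) * mexp (a • Λ) := by
  rw [← aux_mexp_add, ← aux_mexp_add, add_comm]

theorem aux_mexp_cancel {n : ℕ} (τ : ℝ) (Λ : Matrix (Fin n) (Fin n) ℝ) :
    mexp (τ • Λ) * mexp ((-τ) • Λ) = 1 := by
  rw [← aux_mexp_add, add_neg_cancel, zero_smul]
  exact NormedSpace.exp_zero (𝔸 := Matrix (Fin n) (Fin n) ℝ)

theorem aux_mexp_cancel_vec {n : ℕ} (τ : ℝ) (Λ : Matrix (Fin n) (Fin n) ℝ) (B : Fin n → ℝ) :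
    (mexp (τ • Λ)).mulVec ((mexp ((-τ) • Λ)).mulVec B) = B := by
  rw [Matrix.mulVec_mulVec, aux_mexp_cancel, Matrix.one_mulVec]

theorem aux_mulVec_sum {n : ℕ} (M : Matrix (Fin n) (Fin n) ℝ) (f : Fin n → Fin n → ℝ) :
    M.mulVec (∑ j : Fin n, f j) = ∑ j : Fin n, M.mulVec (f j) :=
  map_sum (Matrix.mulVecLin M) f Finset.univ

/-- Key pointwise algebraic identity for the equilibrium integrand. -/
theorem aux_key {n : ℕ} (Λ : Matrix (Fin n) (Fin n) ℝ) (τ α β r : ℝ) (Bh v : Fin n → ℝ) :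
    (mexp (α • Λ)).mulVec
        ((-(1 / r) * (Bh ⬝ᵥ (mexp (β • Λᵀ)).mulVec v)) • ((mexp (τ • Λ)).mulVec Bh))
      = (mexp (τ • Λ)).mulVec
          (-((mexp (α • Λ) * ((1 / r) • vecMulVec Bh Bh) * mexp (β • Λᵀ)).mulVec v)) := by
  set c : ℝ := Bh ⬝ᵥ (mexp (β • Λᵀ)).mulVec v with hc
  have h1 : (mexp (α • Λ) * ((1 / r) • vecMulVec Bh Bh) * mexp (β • Λᵀ)).mulVec v
      = (1 / r * c) • (mexp (α • Λ)).mulVec Bh := by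
    rw [← Matrix.mulVec_mulVec, ← Matrix.mulVec_mulVec, Matrix.smul_mulVec,
      aux_vecMulVec_mulVec, ← hc, Matrix.mulVec_smul, Matrix.mulVec_smul, smul_smul]
  rw [h1, ← neg_smul, Matrix.mulVec_smul, Matrix.mulVec_mulVec, aux_mexp_comm,
    ← Matrix.mulVec_mulVec, Matrix.mulVec_smul, neg_mul]

end AuxLemmas

/-- Theorem 2, trajectory part: the trajectory `x*` of the stubborn Nash equilibrium
profile from `x₀` satisfies `x*(τ) = exp(τΛ)·x₀` and, for every `t ∈ [0,T]`,
`x*(t+τ) = exp(tΛ)·x*(τ) − exp(τΛ)·∑ⱼ (∫₀ᵗ exp((t−s)Λ)·Sⱼ·exp((T−s)Λᵀ) ds)·((Ŵⱼ + ((1−ωⱼ)/dⱼ)·L̂ⱼ)·z − exp(τΛᵀ)·Wⱼ·x₀)`. -/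
theorem statement_16 {n : ℕ} (G : GameData n) (hG : G.Valid) (hH : IsUnit G.Hhat)
    (x0 : Fin n → ℝ) (z : Fin n → ℝ)
    (hz : z = G.Hhat⁻¹.mulVec
      ((mexp (G.T • G.Λ)).mulVec x0 +
        ∑ j : Fin n, (G.Psi j).mulVec ((mexp (G.τ • G.Λᵀ)).mulVec ((G.W j).mulVec x0))))
    (u : Fin n → ℝ → ℝ)
    (hu1 : ∀ i, ∀ t ∈ Set.Icc (0:ℝ) G.T, u i t =
      -(1 / G.r i) *
        (G.Bhat i ⬝ᵥ (mexp ((G.T - t) • G.Λᵀ)).mulVec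
          ((G.What i + ((1 - G.ω i) / G.d i) • G.Lhat i).mulVec z -
            (mexp (G.τ • G.Λᵀ)).mulVec ((G.W i).mulVec x0))))
    (hu2 : ∀ i, ∀ t, t ∉ Set.Icc (0:ℝ) G.T → u i t = 0) :
    G.xtraj x0 u G.τ = (mexp (G.τ • G.Λ)).mulVec x0 ∧
      ∀ t ∈ Set.Icc (0:ℝ) G.T,
        G.xtraj x0 u (t + G.τ) =
          (mexp (t • G.Λ)).mulVec (G.xtraj x0 u G.τ) -
            (mexp (G.τ • G.Λ)).mulVec
              (∑ j : Fin n, (G.Phi G.T j t).mulVec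
                ((G.What j + ((1 - G.ω j) / G.d j) • G.Lhat j).mulVec z -
                  (mexp (G.τ • G.Λᵀ)).mulVec ((G.W j).mulVec x0)))  := by
  obtain ⟨hτ0, hτtf, hr, hd, hL, hω⟩ := hG
  have hT0 : 0 ≤ G.T := by unfold GameData.T; linarith
  -- the input vanishes before time τ
  have hFzero : ∀ s : ℝ, s < G.τ → (∑ j : Fin n, u j (s - G.τ) • G.B j) = (0 : Fin n → ℝ) := by
    intro s hs
    have hu : ∀ j : Fin n, u j (s - G.τ) = 0 := fun j =>
      hu2 j _ (fun h => absurd h.1 (by linarith))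
    simp [hu]
  have hae : ∀ᵐ s : ℝ, s ≠ G.τ := by
    have hset : {s : ℝ | ¬ s ≠ G.τ} = {G.τ} := by ext s; simp [not_not]
    rw [MeasureTheory.ae_iff, hset]
    exact measure_singleton _
  -- the integral over [0, τ] vanishes
  have hzero : ∀ t' : ℝ,
      (∫ s in (0:ℝ)..G.τ,
        (mexp ((t' - s) • G.Λ)).mulVec (∑ j : Fin n, u j (s - G.τ) • G.B j)) = 0 := by
    intro t'
    have h : (∫ s in (0:ℝ)..G.τ,
        (mexp ((t' - s) • G.Λ)).mulVec (∑ j : Fin n, u j (s - G.τ) • G.B j))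
        = ∫ _ in (0:ℝ)..G.τ, (0 : Fin n → ℝ) := by
      apply intervalIntegral.integral_congr_ae
      filter_upwards [hae] with s hs hmem
      rw [Set.uIoc_of_le hτ0] at hmem
      rw [hFzero s (lt_of_le_of_ne hmem.2 hs), Matrix.mulVec_zero]
    rw [h, intervalIntegral.integral_zero]
  have hpart1 : G.xtraj x0 u G.τ = (mexp (G.τ • G.Λ)).mulVec x0 := by
    unfold GameData.xtraj
    rw [hzero G.τ, add_zero]
  refine ⟨hpart1, ?_⟩
  rintro t ⟨ht0, htT⟩
  have hττ : G.τ ≤ t + G.τ := by linarith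
  -- abbreviations
  set v : Fin n → Fin n → ℝ := fun j =>
    (G.What j + ((1 - G.ω j) / G.d j) • G.Lhat j).mulVec z -
      (mexp (G.τ • G.Λᵀ)).mulVec ((G.W j).mulVec x0) with hv
  set w : Fin n → ℝ → Fin n → ℝ := fun j σ =>
    (-(1 / G.r j) * (G.Bhat j ⬝ᵥ (mexp ((G.T - σ) • G.Λᵀ)).mulVec (v j))) • G.B j with hw
  set g : ℝ → Fin n → ℝ := fun s =>
    (mexp ((t + G.τ - s) • G.Λ)).mulVec (∑ j : Fin n, w j (s - G.τ)) with hg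
  set f : ℝ → Fin n → ℝ := fun s =>
    (mexp ((t + G.τ - s) • G.Λ)).mulVec (∑ j : Fin n, u j (s - G.τ) • G.B j) with hf
  -- continuity facts
  have hcont_exp : ∀ (Λ' : Matrix (Fin n) (Fin n) ℝ) (c : ℝ),
      Continuous (fun σ : ℝ => mexp ((c - σ) • Λ')) := fun Λ' c =>
    (aux_mexp_continuous Λ').comp (continuous_const.sub continuous_id)
  have hcontw : ∀ j : Fin n, Continuous (w j) := by
    intro j
    exact ((continuous_const.mul (continuous_const.dotProduct
      ((hcont_exp G.Λᵀ G.T).matrix_mulVec continuous_const))).smul continuous_const)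
  have hcontg : Continuous g := by
    apply (hcont_exp G.Λ (t + G.τ)).matrix_mulVec
    exact continuous_finset_sum _ fun j _ => (hcontw j).comp (continuous_id.sub continuous_const)
  -- f agrees with g on [τ, t + τ]
  have hfg : ∀ s ∈ Set.Icc G.τ (t + G.τ), f s = g s := by
    intro s hs
    have hmem : s - G.τ ∈ Set.Icc (0:ℝ) G.T :=
      ⟨by linarith [hs.1], by have := hs.2; linarith⟩
    simp only [hf, hg, hw]
    refine congrArg (fun y => (mexp ((t + G.τ - s) • G.Λ)).mulVec y) ?_
    exact Finset.sum_congr rfl fun j _ => by rw [hu1 j _ hmem]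
  -- integrability of f on [0, τ]
  have hInt1 : IntervalIntegrable f MeasureTheory.volume 0 G.τ := by
    apply (intervalIntegrable_const (c := (0 : Fin n → ℝ))).congr_ae
    filter_upwards [MeasureTheory.ae_restrict_mem measurableSet_uIoc,
      MeasureTheory.ae_restrict_of_ae hae] with s hmem hs
    rw [Set.uIoc_of_le hτ0] at hmem
    simp only [hf]
    rw [hFzero s (lt_of_le_of_ne hmem.2 hs), Matrix.mulVec_zero]
  have hInt2 : IntervalIntegrable f MeasureTheory.volume G.τ (t + G.τ) := by
    apply (hcontg.intervalIntegrable _ _).congr_ae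
    filter_upwards [MeasureTheory.ae_restrict_mem measurableSet_uIoc] with s hmem
    rw [Set.uIoc_of_le hττ] at hmem
    exact (hfg s (Set.Ioc_subset_Icc_self hmem)).symm
  -- the interval [τ, t+τ] integral of g, shifted
  have hshift : ∀ σ : ℝ, g (σ + G.τ) = (mexp ((t - σ) • G.Λ)).mulVec (∑ j : Fin n, w j σ) := by
    intro σ
    simp only [hg]
    rw [show t + G.τ - (σ + G.τ) = t - σ by ring, add_sub_cancel_right]
  -- the key pointwise identity
  have hB : ∀ j : Fin n, G.B j = (mexp (G.τ • G.Λ)).mulVec (G.Bhat j) := fun j =>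
    (aux_mexp_cancel_vec G.τ G.Λ (G.B j)).symm
  have hkey : ∀ σ : ℝ,
      (mexp ((t - σ) • G.Λ)).mulVec (∑ j : Fin n, w j σ)
        = (mexp (G.τ • G.Λ)).mulVec
            (-(∑ j : Fin n,
              (mexp ((t - σ) • G.Λ) * G.S j * mexp ((G.T - σ) • G.Λᵀ)).mulVec (v j))) := by
    intro σ
    rw [aux_mulVec_sum, Matrix.mulVec_neg, aux_mulVec_sum, ← Finset.sum_neg_distrib]
    refine Finset.sum_congr rfl fun j _ => ?_
    simp only [hw, GameData.S]
    rw [hB j, ← Matrix.mulVec_neg]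
    exact aux_key G.Λ G.τ (t - σ) (G.T - σ) (G.r j) (G.Bhat j) (v j)
  -- integrability of the matrix-integrand pieces
  have hcontM : ∀ j : Fin n, Continuous (fun σ : ℝ =>
      mexp ((t - σ) • G.Λ) * G.S j * mexp ((G.T - σ) • G.Λᵀ)) := fun j =>
    ((hcont_exp G.Λ t).matrix_mul continuous_const).matrix_mul (hcont_exp G.Λᵀ G.T)
  have hcontMv : ∀ j : Fin n, Continuous (fun σ : ℝ =>
      (mexp ((t - σ) • G.Λ) * G.S j * mexp ((G.T - σ) • G.Λᵀ)).mulVec (v j)) := fun j =>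
    (hcontM j).matrix_mulVec continuous_const
  -- componentwise identification with Phi
  have hPhi : ∀ j : Fin n,
      (∫ σ in (0:ℝ)..t,
        (mexp ((t - σ) • G.Λ) * G.S j * mexp ((G.T - σ) • G.Λᵀ)).mulVec (v j))
        = (G.Phi G.T j t).mulVec (v j) := by
    intro j
    funext a
    have hproj := (ContinuousLinearMap.proj (R := ℝ) (φ := fun _ : Fin n => ℝ) a
      ).intervalIntegral_comp_comm ((hcontMv j).intervalIntegrable (μ := MeasureTheory.volume) 0 t)
    simp only [ContinuousLinearMap.proj_apply] at hproj
    rw [← hproj]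
    have : ∀ σ : ℝ,
        ((mexp ((t - σ) • G.Λ) * G.S j * mexp ((G.T - σ) • G.Λᵀ)).mulVec (v j)) a
          = ∑ b : Fin n, (mexp ((t - σ) • G.Λ) * G.S j * mexp ((G.T - σ) • G.Λᵀ)) a b * v j b :=
      fun σ => rfl
    simp only [this]
    rw [intervalIntegral.integral_finset_sum (fun b _ => ?_)]
    · rw [GameData.Phi]
      simp only [Matrix.mulVec, dotProduct, Matrix.of_apply]
      refine Finset.sum_congr rfl fun b _ => ?_
      rw [intervalIntegral.integral_mul_const]
    · exact ((((hcontM j).matrix_elem a b).mul continuous_const).intervalIntegrable 0 t)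
  -- put everything together
  have hIntInner : IntervalIntegrable (fun σ : ℝ =>
      -(∑ j : Fin n,
        (mexp ((t - σ) • G.Λ) * G.S j * mexp ((G.T - σ) • G.Λᵀ)).mulVec (v j)))
      MeasureTheory.volume 0 t :=
    ((continuous_finset_sum _ fun j _ => hcontMv j).neg).intervalIntegrable 0 t
  have hmain : (∫ s in (0:ℝ)..(t + G.τ), f s)
      = -(mexp (G.τ • G.Λ)).mulVec
          (∑ j : Fin n, (G.Phi G.T j t).mulVec (v j)) := by
    rw [← intervalIntegral.integral_add_adjacent_intervals hInt1 hInt2]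
    have h01 : (∫ s in (0:ℝ)..G.τ, f s) = 0 := hzero (t + G.τ)
    have h12 : (∫ s in G.τ..(t + G.τ), f s) = ∫ s in G.τ..(t + G.τ), g s := by
      apply intervalIntegral.integral_congr
      intro s hs
      rw [Set.uIcc_of_le hττ] at hs
      exact hfg s hs
    rw [h01, zero_add, h12]
    have h23 : (∫ s in G.τ..(t + G.τ), g s) = ∫ σ in (0:ℝ)..t, g (σ + G.τ) := by
      rw [intervalIntegral.integral_comp_add_right g G.τ, zero_add]
    rw [h23]
    simp only [hshift, hkey]
    set E : (Fin n → ℝ) →L[ℝ] (Fin n → ℝ) :=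
      LinearMap.toContinuousLinearMap (Matrix.mulVecLin (mexp (G.τ • G.Λ))) with hE
    have hEapp : ∀ x : Fin n → ℝ, E x = (mexp (G.τ • G.Λ)).mulVec x := fun x => by
      rw [hE]; simp [Matrix.mulVecLin_apply]
    calc (∫ σ in (0:ℝ)..t, (mexp (G.τ • G.Λ)).mulVec
            (-(∑ j : Fin n,
              (mexp ((t - σ) • G.Λ) * G.S j * mexp ((G.T - σ) • G.Λᵀ)).mulVec (v j))))
        = E (∫ σ in (0:ℝ)..t,
            -(∑ j : Fin n,
              (mexp ((t - σ) • G.Λ) * G.S j * mexp ((G.T - σ) • G.Λᵀ)).mulVec (v j))) := by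
          rw [← ContinuousLinearMap.intervalIntegral_comp_comm E hIntInner]
          simp only [hEapp]
      _ = -(mexp (G.τ • G.Λ)).mulVec (∑ j : Fin n, (G.Phi G.T j t).mulVec (v j)) := by
          rw [intervalIntegral.integral_neg,
            intervalIntegral.integral_finset_sum (fun j _ => (hcontMv j).intervalIntegrable 0 t)]
          simp only [hEapp, hPhi, Matrix.mulVec_neg]
  -- final assembly
  have hx : G.xtraj x0 u (t + G.τ)
      = (mexp ((t + G.τ) • G.Λ)).mulVec x0 + ∫ s in (0:ℝ)..(t + G.τ), f s := rfl
  rw [hx, hmain, hpart1, Matrix.mulVec_mulVec, ← aux_mexp_add]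
  rw [sub_eq_add_neg]
end
end
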